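/- If V_AB and Γ_A are pure quantum covariance matrices (i.e., QCMs with determinant 1), then the Schur complement V'_B := (V_AB + Γ_A ⊕ 0_B)/(V_A + Γ_A) is also a pure QCM, i.e., det V'_B = 1 and V'_B ≥ iΩ_B. -/

import Mathlib

open Matrix ComplexOrder

/-- The standard symplectic form on `m` modes, in the `x|p` block representation. -/
noncomputable def Omg (m : ℕ) : Matrix (Fin m ⊕ Fin m) (Fin m ⊕ Fin m) ℝ :=
  fromBlocks 0 1 (-1) 0

set_option maxHeartbeats 1000000

section helpers
variable {n : Type*} [Fintype n] [DecidableEq n]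

lemma mapC_mul {m o : Type*} [Fintype m] (M : Matrix n m ℝ) (N : Matrix m o ℝ) :
    (M * N).map Complex.ofReal = M.map Complex.ofReal * N.map Complex.ofReal := by
  ext i j
  simp only [Matrix.map_apply, Matrix.mul_apply]
  push_cast
  rfl

lemma mapC_add {m : Type*} (M N : Matrix n m ℝ) :
    (M + N).map Complex.ofReal = M.map Complex.ofReal + N.map Complex.ofReal := by
  ext i j; simp

lemma mapC_sub {m : Type*} (M N : Matrix n m ℝ) :
    (M - N).map Complex.ofReal = M.map Complex.ofReal - N.map Complex.ofReal := by
  ext i j; simp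

lemma mapC_one : (1 : Matrix n n ℝ).map Complex.ofReal = 1 := by
  ext i j
  by_cases hij : i = j <;> simp [Matrix.one_apply, hij]

lemma mapC_negOne : (-1 : Matrix n n ℝ).map Complex.ofReal = -1 := by
  ext i j
  by_cases hij : i = j <;> simp [Matrix.one_apply, hij]

lemma mapC_det (M : Matrix n n ℝ) : (M.map Complex.ofReal).det = (M.det : ℂ) := by
  have := RingHom.map_det Complex.ofRealHom M
  simp only [RingHom.mapMatrix_apply] at this
  exact this.symm

lemma mapC_inv (M : Matrix n n ℝ) (h : IsUnit M.det) :
    (M⁻¹).map Complex.ofReal = (M.map Complex.ofReal)⁻¹ := by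
  symm
  apply Matrix.inv_eq_left_inv
  rw [← mapC_mul, Matrix.nonsing_inv_mul _ h, mapC_one]

lemma herm_of_symm {M : Matrix n n ℝ} (h : M.IsSymm) :
    (M.map Complex.ofReal).IsHermitian := by
  ext i j
  simp only [conjTranspose_apply, Matrix.map_apply, Complex.star_def, Complex.conj_ofReal]
  rw [← h.apply i j]

lemma transpose_mapC_symm {M : Matrix n n ℝ} (h : M.IsSymm) :
    (M.map Complex.ofReal)ᵀ = M.map Complex.ofReal := by
  rw [← Matrix.transpose_map, h]

lemma psd_half {M : Matrix n n ℂ} (hH : M.IsHermitian)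
    (h2 : (M + M).PosSemidef) : M.PosSemidef := by
  refine PosSemidef.of_dotProduct_mulVec_nonneg hH fun x => ?_
  have h := h2.dotProduct_mulVec_nonneg x
  rw [add_mulVec, dotProduct_add] at h
  rw [Complex.le_def] at h ⊢
  simp only [Complex.add_re, Complex.add_im, Complex.zero_re, Complex.zero_im] at h ⊢
  constructor
  · linarith [h.1]
  · linarith [h.2]

/-- transpose trick: `N + iJ ≥ 0` from `N - iJ ≥ 0`. -/
lemma psd_plus_of_minus {N J : Matrix n n ℝ} (hNs : N.IsSymm) (hJt : Jᵀ = -J)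
    (hP : ((N.map Complex.ofReal) - Complex.I • J.map Complex.ofReal).PosSemidef) :
    ((N.map Complex.ofReal) + Complex.I • J.map Complex.ofReal).PosSemidef := by
  have h := hP.transpose
  have hJct : (J.map Complex.ofReal)ᵀ = -(J.map Complex.ofReal) := by
    rw [← Matrix.transpose_map, hJt]; ext i j; simp
  have ht : ((N.map Complex.ofReal) - Complex.I • J.map Complex.ofReal)ᵀ
      = (N.map Complex.ofReal) + Complex.I • J.map Complex.ofReal := by
    rw [transpose_sub, transpose_smul, hJct, transpose_mapC_symm hNs, smul_neg,
      sub_neg_eq_add]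
  rwa [ht] at h

/-- the real part `N` itself is PSD. -/
lemma psd_real_part {N J : Matrix n n ℝ} (hNs : N.IsSymm) (hJt : Jᵀ = -J)
    (hP : ((N.map Complex.ofReal) - Complex.I • J.map Complex.ofReal).PosSemidef) :
    (N.map Complex.ofReal).PosSemidef := by
  refine psd_half (herm_of_symm hNs) ?_
  have e : N.map Complex.ofReal + N.map Complex.ofReal
      = ((N.map Complex.ofReal) - Complex.I • J.map Complex.ofReal)
        + ((N.map Complex.ofReal) + Complex.I • J.map Complex.ofReal) := by abel
  rw [e]
  exact hP.add (psd_plus_of_minus hNs hJt hP)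

lemma posdef_of_psd_det {M : Matrix n n ℂ} (hM : M.PosSemidef) (h : M.det ≠ 0) :
    M.PosDef := by
  refine posDef_iff_dotProduct_mulVec.mpr ⟨hM.1, fun x hx => ?_⟩
  refine lt_of_le_of_ne (hM.dotProduct_mulVec_nonneg x) fun h0 => hx ?_
  have hz : M *ᵥ x = 0 := (hM.dotProduct_mulVec_zero_iff x).mp h0.symm
  have hU : IsUnit M.det := isUnit_iff_ne_zero.mpr h
  calc x = 1 *ᵥ x := by simp
  _ = (M⁻¹ * M) *ᵥ x := by rw [Matrix.nonsing_inv_mul _ hU]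
  _ = M⁻¹ *ᵥ (M *ᵥ x) := by rw [mulVec_mulVec]
  _ = 0 := by rw [hz, mulVec_zero]

lemma star_sum_elim {l m : Type*} (u : l → ℂ) (v : m → ℂ) :
    star (Sum.elim u v) = Sum.elim (star u) (star v) := by
  funext i; cases i <;> rfl

lemma posdef_block₁₁ {l m : Type*} [Fintype l] [Fintype m]
    {M : Matrix (l ⊕ m) (l ⊕ m) ℂ} (hM : M.PosDef) : (M.toBlocks₁₁).PosDef := by
  rw [posDef_iff_dotProduct_mulVec]
  constructor
  · ext i j
    have := congrFun (congrFun hM.1.eq (Sum.inl i)) (Sum.inl j)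
    simpa [toBlocks₁₁, conjTranspose_apply] using this
  · intro x hx
    have hx' : (Sum.elim x 0 : l ⊕ m → ℂ) ≠ 0 := by
      intro h
      apply hx
      funext i
      exact congrFun h (Sum.inl i)
    have h := (posDef_iff_dotProduct_mulVec.mp hM).2 hx'
    rw [← fromBlocks_toBlocks M, fromBlocks_mulVec] at h
    simp only [Sum.elim_comp_inl, Sum.elim_comp_inr, mulVec_zero, add_zero] at h
    rw [star_sum_elim, sumElim_dotProduct_sumElim] at h
    simpa using h

lemma psd_embed₁₁ {l m : Type*} [Fintype l] [Fintype m]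
    {P : Matrix l l ℂ} (hP : P.PosSemidef) :
    (fromBlocks P 0 0 (0 : Matrix m m ℂ)).PosSemidef := by
  rw [posSemidef_iff_dotProduct_mulVec]
  constructor
  · rw [IsHermitian, fromBlocks_conjTranspose]
    simp [hP.1.eq]
  · intro x
    rw [← Sum.elim_comp_inl_inr x, fromBlocks_mulVec]
    simp only [mulVec_zero, add_zero, zero_add, zero_mulVec]
    rw [star_sum_elim, sumElim_dotProduct_sumElim]
    simpa using hP.dotProduct_mulVec_nonneg (x ∘ Sum.inl)

lemma psd_le_one_det_one_eq_one
    {C : Matrix n n ℂ} (hC : C.PosSemidef) (h1 : (1 - C).PosSemidef)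
    (hdet : C.det = 1) : C = 1 := by
  have h := hC.1
  set μ := h.eigenvalues with hμ
  have hnn : ∀ i, 0 ≤ μ i := hC.eigenvalues_nonneg
  have hvv : ∀ i, star ⇑(h.eigenvectorBasis i) ⬝ᵥ ⇑(h.eigenvectorBasis i) = 1 := by
    intro i
    have hn := h.eigenvectorBasis.orthonormal.1 i
    have h2 : (inner ℂ (h.eigenvectorBasis i) (h.eigenvectorBasis i) : ℂ) = 1 := by
      rw [inner_self_eq_norm_sq_to_K, hn]; norm_num
    rwa [EuclideanSpace.inner_eq_star_dotProduct, dotProduct_comm] at h2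
  have hle : ∀ i, μ i ≤ 1 := by
    intro i
    have h2 := h1.dotProduct_mulVec_nonneg ⇑(h.eigenvectorBasis i)
    rw [sub_mulVec, one_mulVec, dotProduct_sub, h.mulVec_eigenvectorBasis,
      dotProduct_smul, hvv i] at h2
    have h3 : (0:ℂ) ≤ 1 - (μ i : ℂ) := by simpa using h2
    have h4 := Complex.le_def.mp h3
    simpa using h4.1
  have hprod : ∏ i, μ i = 1 := by
    have h2 := h.det_eq_prod_eigenvalues
    rw [hdet] at h2
    have h3 : ((∏ i, μ i : ℝ) : ℂ) = 1 := by rw [Complex.ofReal_prod]; exact h2.symm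
    exact_mod_cast h3
  have hone : ∀ i, μ i = 1 := by
    intro i
    refine le_antisymm (hle i) ?_
    have h2 : μ i * ∏ x ∈ Finset.univ.erase i, μ x = 1 := by
      rw [Finset.mul_prod_erase _ _ (Finset.mem_univ i)]; exact hprod
    have h3 : ∏ x ∈ Finset.univ.erase i, μ x ≤ 1 :=
      Finset.prod_le_one (fun j _ => hnn j) (fun j _ => hle j)
    calc (1:ℝ) = μ i * ∏ x ∈ Finset.univ.erase i, μ x := h2.symm
    _ ≤ μ i * 1 := mul_le_mul_of_nonneg_left h3 (hnn i)
    _ = μ i := mul_one _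
  have hdiag : Matrix.diagonal (RCLike.ofReal ∘ μ) = (1 : Matrix n n ℂ) := by
    funext i
    ext j
    rcases eq_or_ne i j with rfl | hij
    · simp [hone i]
    · simp [Matrix.diagonal_apply_ne _ hij, Matrix.one_apply_ne hij]
  have hst := h.spectral_theorem
  rw [hdiag, map_one] at hst
  exact hst

/-- purity: a real symmetric matrix `N` with `det N = 1` and `N ≥ iJ` (where `Jᵀ = -J`,
`J² = -1`) satisfies `N J N = J`. -/
lemma pure_symplectic
    {N J : Matrix n n ℝ} (hNs : N.IsSymm) (hJt : Jᵀ = -J) (hJ2 : J * J = -1)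
    (hdet : N.det = 1)
    (hP : ((N.map Complex.ofReal) - Complex.I • J.map Complex.ofReal).PosSemidef) :
    N * J * N = J := by
  set Nc := N.map Complex.ofReal with hNc
  set Jc := J.map Complex.ofReal with hJc
  have hJc2 : Jc * Jc = -1 := by
    rw [hJc, ← mapC_mul, hJ2, mapC_negOne]
  have hNcH : Nc.IsHermitian := herm_of_symm hNs
  have hNcdet : Nc.det = 1 := by
    rw [hNc, mapC_det, hdet]; simp
  have hQ : (Nc + Complex.I • Jc).PosSemidef := psd_plus_of_minus hNs hJt hP
  have hNcPSD : Nc.PosSemidef := psd_real_part hNs hJt hP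
  have hNcU : IsUnit Nc.det := by rw [hNcdet]; exact isUnit_one
  have hNciH : (Nc⁻¹)ᴴ = Nc⁻¹ := by rw [Matrix.conjTranspose_nonsing_inv, hNcH.eq]
  have hNciPSD : (Nc⁻¹).PosSemidef := by
    have h := hNcPSD.conjTranspose_mul_mul_same (Nc⁻¹)
    rwa [hNciH, Matrix.nonsing_inv_mul _ hNcU, one_mul] at h
  -- square root of `Nc⁻¹`
  obtain ⟨R, hRH, hRR⟩ : ∃ R : Matrix n n ℂ, Rᴴ = R ∧ R * R = Nc⁻¹ := by
    open scoped MatrixOrder in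
    obtain ⟨X, hX, -, hXX⟩ := CFC.exists_sqrt_of_isSelfAdjoint_of_quasispectrumRestricts
      hNciPSD.1 (QuasispectrumRestricts.nnreal_of_nonneg hNciPSD.nonneg)
    exact ⟨X, hX.star_eq, hXX⟩
  have hdetRR : R.det * R.det = 1 := by
    rw [← Matrix.det_mul, hRR, Matrix.det_nonsing_inv, hNcdet]; simp
  have hRdet : IsUnit R.det := IsUnit.of_mul_eq_one _ hdetRR
  have hRNR : R * Nc * R = 1 := by
    have hNcinv : Nc = (R * R)⁻¹ := by rw [hRR, Matrix.nonsing_inv_nonsing_inv _ hNcU]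
    rw [hNcinv, Matrix.mul_inv_rev]
    rw [show R * (R⁻¹ * R⁻¹) * R = R * R⁻¹ * (R⁻¹ * R) by noncomm_ring]
    rw [Matrix.mul_nonsing_inv _ hRdet, Matrix.nonsing_inv_mul _ hRdet, one_mul]
  -- the Hermitian matrix `B = i R Jc R`
  set B := Complex.I • (R * Jc * R) with hBdef
  have honeSub : 1 - B = R * (Nc - Complex.I • Jc) * R := by
    rw [Matrix.mul_sub, Matrix.sub_mul, hRNR]
    congr 1
    rw [Matrix.mul_smul, Matrix.smul_mul]
  have honeAdd : 1 + B = R * (Nc + Complex.I • Jc) * R := by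
    rw [Matrix.mul_add, Matrix.add_mul, hRNR]
    congr 1
    rw [Matrix.mul_smul, Matrix.smul_mul]
  have hsubPSD : (1 - B).PosSemidef := by
    rw [honeSub]
    nth_rewrite 1 [← hRH]
    exact hP.conjTranspose_mul_mul_same R
  have haddPSD : (1 + B).PosSemidef := by
    rw [honeAdd]
    nth_rewrite 1 [← hRH]
    exact hQ.conjTranspose_mul_mul_same R
  have hBH : B.IsHermitian := by
    have h1 : (1 + B).IsHermitian := haddPSD.1
    have h2 := h1.sub (Matrix.isHermitian_one)
    simpa using h2
  -- C = B²  is PSD with 1 - C PSD and det C = 1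
  set C := B * B with hCdef
  have hCPSD : C.PosSemidef := by
    have h1 := Matrix.posSemidef_conjTranspose_mul_self B
    rwa [hBH.eq] at h1
  have hCH : (1 - C).IsHermitian := Matrix.isHermitian_one.sub (hCPSD.1)
  have hsub1 : ((1 - C) + (1 - C)).PosSemidef := by
    have hadH : (1 + B)ᴴ = 1 + B := by
      rw [conjTranspose_add, conjTranspose_one, hBH.eq]
    have hsuH : (1 - B)ᴴ = 1 - B := by
      rw [conjTranspose_sub, conjTranspose_one, hBH.eq]
    have e : (1 - C) + (1 - C) =
        (1 + B)ᴴ * (1 - B) * (1 + B) + (1 - B)ᴴ * (1 + B) * (1 - B) := by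
      rw [hadH, hsuH, hCdef]
      noncomm_ring
    rw [e]
    exact (hsubPSD.conjTranspose_mul_mul_same (1 + B)).add
      (haddPSD.conjTranspose_mul_mul_same (1 - B))
  have hsubCPSD : (1 - C).PosSemidef := psd_half hCH hsub1
  -- determinant facts
  have hdetJc : Jc.det * Jc.det = (-1:ℂ) ^ Fintype.card n := by
    rw [← Matrix.det_mul, hJc2]
    rw [show (-1 : Matrix n n ℂ) = -(1 : Matrix n n ℂ) by simp, Matrix.det_neg,
      Matrix.det_one, mul_one]
  have e : C = (-1:ℂ) • (R * Jc * (R * R) * Jc * R) := by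
    rw [hCdef, hBdef]
    rw [Matrix.smul_mul, Matrix.mul_smul, smul_smul, Complex.I_mul_I]
    congr 1
    noncomm_ring
  have hdetNci : (Nc⁻¹).det = 1 := by
    rw [Matrix.det_nonsing_inv, hNcdet]; simp
  have hCdet : C.det = 1 := by
    rw [e, Matrix.det_smul, hRR]
    rw [show R * Jc * Nc⁻¹ * Jc * R = R * (Jc * (Nc⁻¹ * (Jc * R))) by noncomm_ring]
    simp only [Matrix.det_mul]
    rw [show R.det * (Jc.det * ((Nc⁻¹).det * (Jc.det * R.det)))
        = (R.det * R.det) * (Jc.det * Jc.det) * (Nc⁻¹).det by ring]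
    rw [hdetRR, hdetJc, hdetNci, one_mul, mul_one, ← mul_pow]
    norm_num
  -- conclude C = 1, i.e. B² = 1
  have hC1 : C = 1 := psd_le_one_det_one_eq_one hCPSD hsubCPSD hCdet
  have hRXR : R * (Jc * Nc⁻¹ * Jc) * R = -1 := by
    have h1 : (-1:ℂ) • (R * Jc * (R * R) * Jc * R) = 1 := by rw [← e, hC1]
    rw [neg_one_smul] at h1
    have h2 : R * Jc * (R * R) * Jc * R = -1 := by
      rw [← neg_neg (R * Jc * (R * R) * Jc * R), h1]
    rw [← h2, hRR]
    noncomm_ring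
  have hX : Jc * Nc⁻¹ * Jc = -Nc := by
    have h1 : R⁻¹ * (R * (Jc * Nc⁻¹ * Jc) * R) * R⁻¹ = R⁻¹ * (-1) * R⁻¹ := by
      rw [hRXR]
    rw [show R⁻¹ * (R * (Jc * Nc⁻¹ * Jc) * R) * R⁻¹
        = (R⁻¹ * R) * (Jc * Nc⁻¹ * Jc) * (R * R⁻¹) by noncomm_ring] at h1
    rw [Matrix.nonsing_inv_mul _ hRdet, Matrix.mul_nonsing_inv _ hRdet, one_mul,
      mul_one] at h1
    rw [h1]
    rw [show R⁻¹ * (-1) * R⁻¹ = -(R⁻¹ * R⁻¹) by noncomm_ring, ← Matrix.mul_inv_rev, hRR,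
      Matrix.nonsing_inv_nonsing_inv _ hNcU]
  have hNci : Nc⁻¹ = -(Jc * Nc * Jc) := by
    have h1 : Jc * (Jc * Nc⁻¹ * Jc) * Jc = Jc * (-Nc) * Jc := by rw [hX]
    rw [show Jc * (Jc * Nc⁻¹ * Jc) * Jc = (Jc * Jc) * Nc⁻¹ * (Jc * Jc) by noncomm_ring,
      hJc2] at h1
    rw [show (-1 : Matrix n n ℂ) * Nc⁻¹ * (-1) = Nc⁻¹ by noncomm_ring] at h1
    rw [h1]
    noncomm_ring
  have hfin : Nc * Jc * Nc = Jc := by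
    have h1 : Nc * Nc⁻¹ = 1 := Matrix.mul_nonsing_inv _ hNcU
    rw [hNci] at h1
    have h2 : Nc * Jc * Nc * Jc = -1 := by
      have h2' : -(Nc * Jc * Nc * Jc) = 1 := by rw [← h1]; noncomm_ring
      exact neg_eq_iff_eq_neg.mp h2'
    have h3 : Nc * Jc * Nc * (Jc * Jc) = -1 * Jc := by
      rw [← Matrix.mul_assoc, h2]
    rw [hJc2] at h3
    have h4 : -(Nc * Jc * Nc) = -Jc := by
      rw [show -(Nc * Jc * Nc) = Nc * Jc * Nc * -1 by noncomm_ring, h3]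
      noncomm_ring
    exact neg_injective h4
  have hmap : (N * J * N).map Complex.ofReal = J.map Complex.ofReal := by
    rw [mapC_mul, mapC_mul, ← hNc, ← hJc, hfin]
  ext i j
  have h := congrFun (congrFun hmap i) j
  simpa using h

end helpers

lemma Omg_t (m : ℕ) : (Omg m)ᵀ = -(Omg m) := by
  rw [Omg, fromBlocks_transpose, fromBlocks_neg]
  simp

lemma Omg_sq (m : ℕ) : Omg m * Omg m = -1 := by
  rw [Omg, fromBlocks_multiply]
  rw [show (-1 : Matrix (Fin m ⊕ Fin m) (Fin m ⊕ Fin m) ℝ)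
      = fromBlocks (-1) (-0) (-0) (-1) by rw [← fromBlocks_neg, fromBlocks_one]]
  congr 1 <;> simp

/-- If `V_AB` and `Γ_A` are pure QCMs (real symmetric, `≥ iΩ`, determinant one), then the
Schur complement `V'_B := (V_AB + Γ_A ⊕ 0_B)/(V_A + Γ_A)` is also a pure QCM:
`det V'_B = 1` and `V'_B ≥ iΩ_B`. -/
theorem schur_pure_of_pure {a b : ℕ}
    (V : Matrix ((Fin a ⊕ Fin a) ⊕ (Fin b ⊕ Fin b)) ((Fin a ⊕ Fin a) ⊕ (Fin b ⊕ Fin b)) ℝ)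
    (Γ : Matrix (Fin a ⊕ Fin a) (Fin a ⊕ Fin a) ℝ)
    (hVs : V.IsSymm) (hΓs : Γ.IsSymm)
    (hV : ((V.map Complex.ofReal) -
      Complex.I • (fromBlocks (Omg a) 0 0 (Omg b)).map Complex.ofReal).PosSemidef)
    (hΓ : ((Γ.map Complex.ofReal) - Complex.I • (Omg a).map Complex.ofReal).PosSemidef)
    (hVdet : V.det = 1) (hΓdet : Γ.det = 1) :
    (V.toBlocks₂₂ - V.toBlocks₂₁ * (V.toBlocks₁₁ + Γ)⁻¹ * V.toBlocks₁₂).det = 1 ∧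
    (((V.toBlocks₂₂ - V.toBlocks₂₁ * (V.toBlocks₁₁ + Γ)⁻¹ * V.toBlocks₁₂).map Complex.ofReal)
      - Complex.I • (Omg b).map Complex.ofReal).PosSemidef := by
  classical
  set J : Matrix ((Fin a ⊕ Fin a) ⊕ (Fin b ⊕ Fin b)) ((Fin a ⊕ Fin a) ⊕ (Fin b ⊕ Fin b)) ℝ :=
    fromBlocks (Omg a) 0 0 (Omg b) with hJdef
  have hJt : Jᵀ = -J := by
    rw [hJdef, fromBlocks_transpose, Omg_t, Omg_t, fromBlocks_neg]
    simp
  have hJ2 : J * J = -1 := by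
    rw [hJdef, fromBlocks_multiply]
    rw [show (-1 : Matrix ((Fin a ⊕ Fin a) ⊕ (Fin b ⊕ Fin b)) _ ℝ)
        = fromBlocks (-1) (-0) (-0) (-1) by rw [← fromBlocks_neg, fromBlocks_one]]
    congr 1 <;> simp [Omg_sq]
  -- symplectic conditions
  have hVsymp : V * J * V = J := pure_symplectic hVs hJt hJ2 hVdet hV
  have hΓsymp : Γ * Omg a * Γ = Omg a := pure_symplectic hΓs (Omg_t a) (Omg_sq a) hΓdet hΓ
  have hVU : IsUnit V.det := by rw [hVdet]; exact isUnit_one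
  have hΓU : IsUnit Γ.det := by rw [hΓdet]; exact isUnit_one
  set V11 := V.toBlocks₁₁
  set V12 := V.toBlocks₁₂
  set V21 := V.toBlocks₂₁
  set V22 := V.toBlocks₂₂
  -- inverses via symplecticity
  have hVinv : V⁻¹ = -(J * V * J) := by
    apply Matrix.inv_eq_right_inv
    rw [show V * -(J * V * J) = -(V * J * V * J) by noncomm_ring, hVsymp, hJ2]
    simp
  have hΓinv : Γ⁻¹ = -(Omg a * Γ * Omg a) := by
    apply Matrix.inv_eq_right_inv
    rw [show Γ * -(Omg a * Γ * Omg a) = -(Γ * Omg a * Γ * Omg a) by noncomm_ring, hΓsymp,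
      Omg_sq]
    simp
  -- the key determinant identity
  have hdetkey : (V + fromBlocks Γ 0 0 0).det = (V11 + Γ).det := by
    have h1 : V + fromBlocks Γ 0 0 0 = V * (1 + V⁻¹ * fromBlocks Γ 0 0 0) := by
      rw [Matrix.mul_add, Matrix.mul_one, ← Matrix.mul_assoc,
        Matrix.mul_nonsing_inv _ hVU, Matrix.one_mul]
    have h2' : (J * V * J) * fromBlocks Γ 0 0 0
        = fromBlocks (Omg a * V11 * Omg a * Γ) 0 (Omg b * V21 * Omg a * Γ) 0 := by
      nth_rewrite 1 [← fromBlocks_toBlocks V]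
      rw [hJdef, fromBlocks_multiply, fromBlocks_multiply, fromBlocks_multiply]
      simp [Matrix.mul_assoc]
      exact ⟨rfl, rfl⟩
    have h2 : V⁻¹ * fromBlocks Γ 0 0 0
        = fromBlocks (-(Omg a * V11 * Omg a * Γ)) 0 (-(Omg b * V21 * Omg a * Γ)) 0 := by
      rw [hVinv, Matrix.neg_mul, h2', fromBlocks_neg]
      simp
    have h3 : (1 : Matrix _ _ ℝ) + V⁻¹ * fromBlocks Γ 0 0 0
        = fromBlocks (1 - Omg a * V11 * Omg a * Γ) 0 (-(Omg b * V21 * Omg a * Γ)) 1 := by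
      rw [h2, ← fromBlocks_one, fromBlocks_add]
      congr 1 <;> simp [sub_eq_add_neg]
    have h4 : (V + fromBlocks Γ 0 0 0).det = (1 - Omg a * V11 * Omg a * Γ).det := by
      rw [h1, Matrix.det_mul, hVdet, one_mul, h3, det_fromBlocks_zero₁₂, Matrix.det_one,
        mul_one]
    have h5 : (V11 + Γ).det = (1 - Omg a * Γ * Omg a * V11).det := by
      have e1 : V11 + Γ = Γ * (1 + Γ⁻¹ * V11) := by
        rw [Matrix.mul_add, Matrix.mul_one, ← Matrix.mul_assoc,
          Matrix.mul_nonsing_inv _ hΓU, Matrix.one_mul, add_comm]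
      rw [e1, Matrix.det_mul, hΓdet, one_mul, hΓinv]
      congr 1
      noncomm_ring
    rw [h4, h5]
    -- cyclic determinant manipulations
    rw [show 1 - Omg a * V11 * Omg a * Γ = 1 - (Omg a * V11 * Omg a) * Γ by
      rw [Matrix.mul_assoc]]
    rw [det_one_sub_mul_comm]
    rw [show 1 - Γ * (Omg a * V11 * Omg a) = 1 - (Γ * Omg a * V11) * Omg a by
      noncomm_ring]
    rw [det_one_sub_mul_comm]
    congr 1
    noncomm_ring
  -- positive definiteness of `V11 + Γ`
  have hVcPD : (V.map Complex.ofReal).PosDef := by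
    refine posdef_of_psd_det (psd_real_part hVs hJt hV) ?_
    rw [mapC_det, hVdet]
    simp
  have hV11PD : ((V11.map Complex.ofReal) : Matrix (Fin a ⊕ Fin a) _ ℂ).PosDef := by
    have h := posdef_block₁₁ hVcPD
    have e : (V.map Complex.ofReal).toBlocks₁₁ = V11.map Complex.ofReal := by
      ext i j; rfl
    rwa [e] at h
  have hΓcPSD : (Γ.map Complex.ofReal).PosSemidef := psd_real_part hΓs (Omg_t a) hΓ
  have hAPD : ((V11 + Γ).map Complex.ofReal).PosDef := by
    rw [mapC_add]
    exact hV11PD.add_posSemidef hΓcPSD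
  have hAdetC : ((V11 + Γ).map Complex.ofReal).det ≠ 0 := hAPD.det_pos.ne'
  have hAdetR : (V11 + Γ).det ≠ 0 := by
    intro h0
    rw [mapC_det, h0] at hAdetC
    simp at hAdetC
  have hAU : IsUnit (V11 + Γ).det := isUnit_iff_ne_zero.mpr hAdetR
  haveI : Invertible (V11 + Γ) := (V11 + Γ).invertibleOfIsUnitDet hAU
  -- determinant of the Schur complement
  have hdet1 : (V22 - V21 * (V11 + Γ)⁻¹ * V12).det = 1 := by
    have hsum : V + fromBlocks Γ 0 0 0 = fromBlocks (V11 + Γ) V12 V21 V22 := by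
      nth_rewrite 1 [← fromBlocks_toBlocks V]
      rw [fromBlocks_add]
      congr 1 <;> simp <;> rfl
    have h := hdetkey
    rw [hsum, det_fromBlocks₁₁, invOf_eq_nonsing_inv] at h
    exact mul_left_cancel₀ hAdetR (h.trans (mul_one _).symm)
  refine ⟨hdet1, ?_⟩
  -- the PSD part
  set Ac := (V11 + Γ).map Complex.ofReal with hAc
  set Bc := V12.map Complex.ofReal with hBc
  set Dc := V22.map Complex.ofReal - Complex.I • (Omg b).map Complex.ofReal with hDc
  haveI : Invertible Ac := Ac.invertibleOfIsUnitDet hAPD.det_pos.ne'.isUnit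
  have hBcH : Bcᴴ = V21.map Complex.ofReal := by
    ext i j
    simp only [hBc, conjTranspose_apply, Matrix.map_apply, Complex.star_def,
      Complex.conj_ofReal]
    congr 1
    exact (hVs.apply (Sum.inl j) (Sum.inr i)).symm
  have hNdecomp : fromBlocks Ac Bc Bcᴴ Dc
      = ((V.map Complex.ofReal) -
          Complex.I • (fromBlocks (Omg a) 0 0 (Omg b)).map Complex.ofReal)
        + fromBlocks ((Γ.map Complex.ofReal) + Complex.I • (Omg a).map Complex.ofReal)
            0 0 0 := by
    have e11 : ∀ i j, V11 i j = V (Sum.inl i) (Sum.inl j) := fun _ _ => rfl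
    have e12 : ∀ i j, V12 i j = V (Sum.inl i) (Sum.inr j) := fun _ _ => rfl
    have e21 : ∀ i j, V21 i j = V (Sum.inr i) (Sum.inl j) := fun _ _ => rfl
    have e22 : ∀ i j, V22 i j = V (Sum.inr i) (Sum.inr j) := fun _ _ => rfl
    rw [hBcH]
    ext i j
    rcases i with i | i <;> rcases j with j | j <;>
      simp [hAc, hBc, hDc, fromBlocks, e11, e12, e21, e22,
        Matrix.map_apply, sub_eq_add_neg] <;> ring
  have hNPSD : (fromBlocks Ac Bc Bcᴴ Dc).PosSemidef := by
    rw [hNdecomp]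
    exact hV.add (psd_embed₁₁ (psd_plus_of_minus hΓs (Omg_t a) hΓ))
  have hschurPSD := (PosDef.fromBlocks₁₁ Bc Dc hAPD).mp hNPSD
  have hfinal : (V22 - V21 * (V11 + Γ)⁻¹ * V12).map Complex.ofReal
      - Complex.I • (Omg b).map Complex.ofReal = Dc - Bcᴴ * Ac⁻¹ * Bc := by
    rw [hBcH, hAc, ← mapC_inv _ hAU, hDc, mapC_sub, mapC_mul, mapC_mul]
    abel
  rw [hfinal]
  exact hschurPSD
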